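/- (Contraction giving existence of a solution to the stationary discounted value equation.) Fix μ ∈ 𝒫([d]) and define S^μ : [0, C/r]^d → [0, C/r]^d by S^μ(u)(x) := inf over rate vectors a (with a_y ∈ [𝔞_l, 𝔞_u] for y ≠ x) of (∑_{y≠x} a_y + r)^{−1}(∑_{y≠x} a_y u_y + f(x,a) + F(x,μ)). Then S^μ is a contraction in the sup-norm with constant (d−1)𝔞_u / ((d−1)𝔞_u + r) < 1, hence has a unique fixed point u^μ, and this fixed point satisfies r u^μ_x = H(x, Δ_x u^μ) + F(x,μ) for every x, where H(x,p) = inf_a { f(x,a) + a·p }. -/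

import Mathlib

/-- The set of admissible rate vectors at state `x`: off-diagonal entries in
`[al, au]` and the `x`-entry equal to minus the sum of the others. -/
def admissibleRates (d : ℕ) (al au : ℝ) (x : Fin d) : Set (Fin d → ℝ) :=
  {a : Fin d → ℝ | (∀ y, y ≠ x → a y ∈ Set.Icc al au) ∧
    a x = -∑ y ∈ Finset.univ \ {x}, a y}

/-- The contraction map `S^μ` of the stationary discounted value equation:
it is a sup-norm contraction with constant `(d−1)𝔞_u/((d−1)𝔞_u + r) < 1`, maps
`[0, C/r]^d` into itself, has a unique fixed point, and any fixed point `u`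
satisfies `r u_x = H(x, Δ_x u) + F(x, μ)` where `H(x,p) = inf_a {f(x,a)+a·p}`. -/
theorem stationary_value_map_contraction
    (d : ℕ) (hd : 2 ≤ d) (al au r Cb : ℝ)
    (hal : 0 < al) (hau : al ≤ au) (hr : 0 < r)
    (f F : Fin d → (Fin d → ℝ) → ℝ)
    (hf : ∀ x, Continuous (f x))
    (μ : Fin d → ℝ) (hμ : (∀ x, 0 ≤ μ x) ∧ ∑ x : Fin d, μ x = 1)
    (hbd : ∀ (x : Fin d) (a : Fin d → ℝ), a ∈ admissibleRates d al au x →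
      0 ≤ f x a + F x μ ∧ f x a + F x μ ≤ Cb)
    (Ham : Fin d → (Fin d → ℝ) → ℝ)
    (hHam : ∀ x p, Ham x p =
      sInf ((fun a => f x a + ∑ y : Fin d, a y * p y) '' admissibleRates d al au x))
    (S : (Fin d → ℝ) → Fin d → ℝ)
    (hS : ∀ (u : Fin d → ℝ) (x : Fin d), S u x =
      sInf ((fun a => (∑ y ∈ Finset.univ \ {x}, a y + r)⁻¹ *
          (∑ y ∈ Finset.univ \ {x}, a y * u y + f x a + F x μ)) ''
        admissibleRates d al au x)) :
    (∀ u v : Fin d → ℝ,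
        ‖S u - S v‖ ≤ (((d : ℝ) - 1) * au / (((d : ℝ) - 1) * au + r)) * ‖u - v‖) ∧
    (((d : ℝ) - 1) * au / (((d : ℝ) - 1) * au + r) < 1) ∧
    (∀ u : Fin d → ℝ, (∀ x, u x ∈ Set.Icc 0 (Cb / r)) →
        ∀ x, S u x ∈ Set.Icc 0 (Cb / r)) ∧
    (∃! u : Fin d → ℝ, S u = u) ∧
    (∀ u : Fin d → ℝ, S u = u →
        ∀ x, r * u x = Ham x (fun y => u y - u x) + F x μ) := by
  classical
  have hd1 : (1:ℝ) ≤ (d:ℝ) - 1 := by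
    have h2 : (2:ℝ) ≤ (d:ℝ) := by exact_mod_cast hd
    linarith
  have hD0 : (0:ℝ) < (d:ℝ) - 1 := lt_of_lt_of_le one_pos hd1
  have hau0 : (0:ℝ) < au := lt_of_lt_of_le hal hau
  set K : ℝ := ((d:ℝ) - 1) * au / (((d:ℝ) - 1) * au + r) with hK
  have hKden : (0:ℝ) < ((d:ℝ) - 1) * au + r := by positivity
  have hK0 : 0 ≤ K := by positivity
  have hK1 : K < 1 := by
    rw [hK, div_lt_one hKden]; linarith
  have hcard : ∀ x : Fin d, (((Finset.univ \ {x} : Finset (Fin d)).card : ℝ)) = (d:ℝ) - 1 := by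
    intro x
    rw [Finset.card_sdiff_of_subset (Finset.subset_univ _), Finset.card_singleton, Finset.card_univ,
      Fintype.card_fin, Nat.cast_sub (by omega : 1 ≤ d), Nat.cast_one]
  have hmemT : ∀ x y : Fin d, y ∈ Finset.univ \ ({x} : Finset (Fin d)) ↔ y ≠ x := by
    intro x y; simp [Finset.mem_sdiff]
  -- sum bounds
  have hsum_lb : ∀ (x : Fin d) (a : Fin d → ℝ), a ∈ admissibleRates d al au x →
      ((d:ℝ)-1) * al ≤ ∑ y ∈ Finset.univ \ {x}, a y := by
    intro x a ha
    have h := Finset.sum_le_sum (s := Finset.univ \ {x}) (f := fun _ => al) (g := a)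
      (fun y hy => (ha.1 y ((hmemT x y).mp hy)).1)
    simpa [Finset.sum_const, nsmul_eq_mul, hcard x] using h
  have hsum_ub : ∀ (x : Fin d) (a : Fin d → ℝ), a ∈ admissibleRates d al au x →
      ∑ y ∈ Finset.univ \ {x}, a y ≤ ((d:ℝ)-1) * au := by
    intro x a ha
    have h := Finset.sum_le_sum (s := Finset.univ \ {x}) (f := a) (g := fun _ => au)
      (fun y hy => (ha.1 y ((hmemT x y).mp hy)).2)
    simpa [Finset.sum_const, nsmul_eq_mul, hcard x] using h
  have hs_pos : ∀ (x : Fin d) (a : Fin d → ℝ), a ∈ admissibleRates d al au x →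
      0 < ∑ y ∈ Finset.univ \ {x}, a y := by
    intro x a ha
    have := hsum_lb x a ha
    nlinarith
  have hsr_pos : ∀ (x : Fin d) (a : Fin d → ℝ), a ∈ admissibleRates d al au x →
      0 < ∑ y ∈ Finset.univ \ {x}, a y + r := by
    intro x a ha; have := hs_pos x a ha; linarith
  -- nonemptiness of the admissible set
  have hne : ∀ x : Fin d, (admissibleRates d al au x).Nonempty := by
    intro x
    refine ⟨fun y => if y = x then -(((d:ℝ)-1) * al) else al, ?_, ?_⟩
    · intro y hy
      simp only [if_neg hy]
      exact ⟨le_refl al, hau⟩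
    · have hs : ∑ y ∈ Finset.univ \ {x},
          (if y = x then -(((d:ℝ)-1) * al) else al) = ((d:ℝ)-1) * al := by
        rw [Finset.sum_ite_of_false (fun y hy => (hmemT x y).mp hy)]
        simp [Finset.sum_const, nsmul_eq_mul, hcard x]
      show (if x = x then -(((d:ℝ)-1) * al) else al) =
        -∑ y ∈ Finset.univ \ {x}, (if y = x then -(((d:ℝ)-1) * al) else al)
      rw [if_pos rfl, hs]
  -- abbreviation for the integrand of S
  set g : (Fin d → ℝ) → Fin d → (Fin d → ℝ) → ℝ := fun u x a =>
    (∑ y ∈ Finset.univ \ {x}, a y + r)⁻¹ *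
      (∑ y ∈ Finset.univ \ {x}, a y * u y + f x a + F x μ) with hg
  have hSg : ∀ (u : Fin d → ℝ) (x : Fin d), S u x = sInf (g u x '' admissibleRates d al au x) :=
    hS
  -- weighted sum estimate
  have hsum_mul_le : ∀ (x : Fin d) (a w : Fin d → ℝ), a ∈ admissibleRates d al au x →
      |∑ y ∈ Finset.univ \ {x}, a y * w y| ≤ (∑ y ∈ Finset.univ \ {x}, a y) * ‖w‖ := by
    intro x a w ha
    calc |∑ y ∈ Finset.univ \ {x}, a y * w y| ≤ ∑ y ∈ Finset.univ \ {x}, |a y * w y| :=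
          Finset.abs_sum_le_sum_abs _ _
      _ ≤ ∑ y ∈ Finset.univ \ {x}, a y * ‖w‖ := by
          refine Finset.sum_le_sum fun y hy => ?_
          have hay : 0 ≤ a y := le_trans hal.le (ha.1 y ((hmemT x y).mp hy)).1
          rw [abs_mul, abs_of_nonneg hay]
          exact mul_le_mul_of_nonneg_left (by
            simpa [Real.norm_eq_abs] using norm_le_pi_norm w y) hay
      _ = (∑ y ∈ Finset.univ \ {x}, a y) * ‖w‖ := by rw [Finset.sum_mul]
  -- lower bound for g, giving BddBelow
  have hg_lb : ∀ (u : Fin d → ℝ) (x : Fin d) (a : Fin d → ℝ), a ∈ admissibleRates d al au x →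
      -‖u‖ ≤ g u x a := by
    intro u x a ha
    set s := ∑ y ∈ Finset.univ \ {x}, a y with hs
    have hsr := hsr_pos x a ha
    have h1 : -(s * ‖u‖) ≤ ∑ y ∈ Finset.univ \ {x}, a y * u y :=
      neg_le_of_abs_le (hsum_mul_le x a u ha) |>.trans_eq rfl
    have h2 : 0 ≤ f x a + F x μ := (hbd x a ha).1
    have h3 : (s + r) * (-‖u‖) ≤ ∑ y ∈ Finset.univ \ {x}, a y * u y + f x a + F x μ := by
      have hnu : 0 ≤ ‖u‖ := norm_nonneg u
      nlinarith
    have hgeq : g u x a = (s + r)⁻¹ *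
        (∑ y ∈ Finset.univ \ {x}, a y * u y + f x a + F x μ) := by
      simp only [hg]
      rw [hs]
    calc -‖u‖ = (s + r)⁻¹ * ((s + r) * (-‖u‖)) := by
          rw [← mul_assoc, inv_mul_cancel₀ hsr.ne', one_mul]
      _ ≤ (s + r)⁻¹ * (∑ y ∈ Finset.univ \ {x}, a y * u y + f x a + F x μ) :=
          mul_le_mul_of_nonneg_left h3 (inv_nonneg.mpr hsr.le)
      _ = g u x a := hgeq.symm
  have hbddB : ∀ (u : Fin d → ℝ) (x : Fin d), BddBelow (g u x '' admissibleRates d al au x) := by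
    intro u x
    exact ⟨-‖u‖, by rintro b ⟨a, ha, rfl⟩; exact hg_lb u x a ha⟩
  have hImgNe : ∀ (u : Fin d → ℝ) (x : Fin d), (g u x '' admissibleRates d al au x).Nonempty :=
    fun u x => (hne x).image _
  -- pointwise contraction estimate
  have hptwise : ∀ (u v : Fin d → ℝ) (x : Fin d) (a : Fin d → ℝ),
      a ∈ admissibleRates d al au x → g u x a ≤ g v x a + K * ‖u - v‖ := by
    intro u v x a ha
    set s := ∑ y ∈ Finset.univ \ {x}, a y with hs
    have hsr := hsr_pos x a ha
    have hdiff : g u x a - g v x a = (s + r)⁻¹ * ∑ y ∈ Finset.univ \ {x}, a y * (u y - v y) := by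
      have hsplit : ∑ y ∈ Finset.univ \ {x}, a y * (u y - v y)
          = ∑ y ∈ Finset.univ \ {x}, a y * u y - ∑ y ∈ Finset.univ \ {x}, a y * v y := by
        rw [← Finset.sum_sub_distrib]
        exact Finset.sum_congr rfl fun y _ => by ring
      simp only [hg]
      rw [hsplit, ← hs]
      ring
    have habs : |∑ y ∈ Finset.univ \ {x}, a y * (u y - v y)| ≤ s * ‖u - v‖ := by
      rw [hs]
      have := hsum_mul_le x a (u - v) ha
      simpa only [Pi.sub_apply] using this
    have hsub : g u x a - g v x a ≤ (s + r)⁻¹ * (s * ‖u - v‖) := by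
      rw [hdiff]
      exact le_trans (le_abs_self _) (by
        rw [abs_mul, abs_of_pos (inv_pos.mpr hsr)]
        exact mul_le_mul_of_nonneg_left habs (inv_pos.mpr hsr).le)
    have hfr : (s + r)⁻¹ * s ≤ K := by
      rw [hK, inv_mul_eq_div, div_le_div_iff₀ hsr hKden]
      have h1 := hsum_ub x a ha
      have h2 := hs_pos x a ha
      nlinarith
    have : (s + r)⁻¹ * (s * ‖u - v‖) ≤ K * ‖u - v‖ := by
      rw [← mul_assoc]
      exact mul_le_mul_of_nonneg_right hfr (norm_nonneg _)
    linarith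
  have hSpt : ∀ (u v : Fin d → ℝ) (x : Fin d), S u x ≤ S v x + K * ‖u - v‖ := by
    intro u v x
    rw [hSg u x]
    have : S v x + K * ‖u - v‖ = sInf (g v x '' admissibleRates d al au x) + K * ‖u - v‖ := by
      rw [hSg]
    rw [this]
    rw [← sub_le_iff_le_add]
    refine le_csInf (hImgNe v x) ?_
    rintro b ⟨a, ha, rfl⟩
    rw [sub_le_iff_le_add]
    exact le_trans (csInf_le (hbddB u x) ⟨a, ha, rfl⟩) (hptwise u v x a ha)
  have hcontr : ∀ u v : Fin d → ℝ, ‖S u - S v‖ ≤ K * ‖u - v‖ := by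
    intro u v
    rw [pi_norm_le_iff_of_nonneg (by positivity)]
    intro x
    rw [Real.norm_eq_abs, abs_le]
    constructor
    · have := hSpt v u x
      have hsym : ‖v - u‖ = ‖u - v‖ := norm_sub_rev v u
      simp only [Pi.sub_apply]
      rw [hsym] at this
      linarith
    · have := hSpt u v x
      simp only [Pi.sub_apply]
      linarith
  refine ⟨hcontr, hK1, ?_, ?_, ?_⟩
  · -- invariance of [0, Cb/r]^d
    intro u hu x
    obtain ⟨a0, ha0⟩ := hne x
    have hCb0 : 0 ≤ Cb := le_trans (hbd x a0 ha0).1 (hbd x a0 ha0).2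
    constructor
    · rw [hSg]
      refine le_csInf (hImgNe u x) ?_
      rintro b ⟨a, ha, rfl⟩
      have hsr := hsr_pos x a ha
      have hsum0 : 0 ≤ ∑ y ∈ Finset.univ \ {x}, a y * u y :=
        Finset.sum_nonneg fun y hy => mul_nonneg
          (le_trans hal.le (ha.1 y ((hmemT x y).mp hy)).1) (hu y).1
      have h2 := (hbd x a ha).1
      have : (0:ℝ) ≤ ∑ y ∈ Finset.univ \ {x}, a y * u y + f x a + F x μ := by linarith
      exact mul_nonneg (inv_nonneg.mpr hsr.le) this
    · rw [hSg]
      refine csInf_le_of_le (hbddB u x) ⟨a0, ha0, rfl⟩ ?_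
      set s := ∑ y ∈ Finset.univ \ {x}, a0 y with hs
      have hsr := hsr_pos x a0 ha0
      have hsum_le : ∑ y ∈ Finset.univ \ {x}, a0 y * u y ≤ s * (Cb / r) := by
        rw [hs, Finset.sum_mul]
        refine Finset.sum_le_sum fun y hy => ?_
        exact mul_le_mul_of_nonneg_left (hu y).2
          (le_trans hal.le (ha0.1 y ((hmemT x y).mp hy)).1)
      have h2 := (hbd x a0 ha0).2
      have hnum : ∑ y ∈ Finset.univ \ {x}, a0 y * u y + f x a0 + F x μ ≤ (s + r) * (Cb / r) := by
        have : (s + r) * (Cb / r) = s * (Cb / r) + Cb := by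
          field_simp
        rw [this]
        linarith
      calc g u x a0 ≤ (s + r)⁻¹ * ((s + r) * (Cb / r)) :=
            mul_le_mul_of_nonneg_left hnum (inv_nonneg.mpr hsr.le)
        _ = Cb / r := by
          rw [← mul_assoc, inv_mul_cancel₀ (show s + r ≠ 0 by rw [hs]; exact hsr.ne'), one_mul]
  · -- unique fixed point
    have hlip : LipschitzWith (Real.toNNReal K) S := by
      refine LipschitzWith.of_dist_le_mul fun u v => ?_
      rw [dist_eq_norm, dist_eq_norm, Real.coe_toNNReal K hK0]
      exact hcontr u v
    have hC : ContractingWith (Real.toNNReal K) S := ⟨Real.toNNReal_lt_one.mpr hK1, hlip⟩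
    exact ⟨hC.fixedPoint S, hC.fixedPoint_isFixedPt, fun v hv => hC.fixedPoint_unique hv⟩
  · -- fixed point equation
    intro u hu x
    set p : Fin d → ℝ := fun y => u y - u x with hp
    -- identity: for admissible a, ψ a + F - r u x = (s+r) * (g u x a - u x)
    have hiden : ∀ a : Fin d → ℝ, a ∈ admissibleRates d al au x →
        f x a + ∑ y : Fin d, a y * p y + F x μ - r * u x =
          (∑ y ∈ Finset.univ \ {x}, a y + r) * (g u x a - u x) := by
      intro a ha
      set s := ∑ y ∈ Finset.univ \ {x}, a y with hs
      have hsr := hsr_pos x a ha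
      have hsplit : ∑ y : Fin d, a y * p y =
          ∑ y ∈ Finset.univ \ {x}, a y * u y - s * u x := by
        have h0 : ∑ y : Fin d, a y * p y =
            ∑ y ∈ Finset.univ \ {x}, a y * p y + a x * p x :=
          Finset.sum_eq_sum_sdiff_singleton_add (Finset.mem_univ x) _
        have hpx : p x = 0 := by simp [hp]
        have h1 : ∑ y ∈ Finset.univ \ {x}, a y * p y =
            ∑ y ∈ Finset.univ \ {x}, (a y * u y - a y * u x) :=
          Finset.sum_congr rfl fun y _ => by simp only [hp]; ring
        rw [h0, hpx, mul_zero, add_zero, h1, Finset.sum_sub_distrib, ← Finset.sum_mul, ← hs]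
      have hgval : (s + r) * g u x a =
          ∑ y ∈ Finset.univ \ {x}, a y * u y + f x a + F x μ := by
        simp only [hg]
        rw [← hs, ← mul_assoc, mul_inv_cancel₀ hsr.ne', one_mul]
      rw [hsplit]
      rw [mul_sub, hgval]
      ring
    have hux : u x = sInf (g u x '' admissibleRates d al au x) := by
      conv_lhs => rw [← hu]
      exact hSg u x
    -- lower bound: Ham ≥ r u x - F
    have hlow : ∀ a : Fin d → ℝ, a ∈ admissibleRates d al au x →
        r * u x - F x μ ≤ f x a + ∑ y : Fin d, a y * p y := by
      intro a ha
      have h1 : u x ≤ g u x a := by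
        rw [hux]; exact csInf_le (hbddB u x) ⟨a, ha, rfl⟩
      have h2 := hiden a ha
      have hsr := hsr_pos x a ha
      nlinarith [mul_nonneg hsr.le (sub_nonneg.mpr h1)]
    have hHamNe : ((fun a => f x a + ∑ y : Fin d, a y * p y) ''
        admissibleRates d al au x).Nonempty := (hne x).image _
    have hHamBdd : BddBelow ((fun a => f x a + ∑ y : Fin d, a y * p y) ''
        admissibleRates d al au x) := by
      exact ⟨r * u x - F x μ, by rintro b ⟨a, ha, rfl⟩; exact hlow a ha⟩
    have hge : r * u x - F x μ ≤ Ham x p := by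
      rw [hHam]
      exact le_csInf hHamNe (by rintro b ⟨a, ha, rfl⟩; exact hlow a ha)
    have hle : Ham x p ≤ r * u x - F x μ := by
      refine le_of_forall_pos_lt_add fun ε hε => ?_
      set ε' : ℝ := ε / (((d:ℝ)-1) * au + r) with hε'
      have hε'0 : 0 < ε' := by positivity
      have : sInf (g u x '' admissibleRates d al au x) < u x + ε' := by
        rw [← hux]; linarith
      obtain ⟨b, ⟨a, ha, rfl⟩, hb⟩ := exists_lt_of_csInf_lt (hImgNe u x) this
      have h1 : u x ≤ g u x a := by
        rw [hux]; exact csInf_le (hbddB u x) ⟨a, ha, rfl⟩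
      have h2 := hiden a ha
      have hsr := hsr_pos x a ha
      have hsub := hsum_ub x a ha
      have hkey : f x a + ∑ y : Fin d, a y * p y + F x μ - r * u x < ε := by
        rw [h2]
        have hd1 : g u x a - u x < ε' := by linarith
        have hd0 : 0 ≤ g u x a - u x := sub_nonneg.mpr h1
        have : (∑ y ∈ Finset.univ \ {x}, a y + r) * (g u x a - u x) ≤
            (((d:ℝ)-1) * au + r) * (g u x a - u x) := by
          exact mul_le_mul_of_nonneg_right (by linarith) hd0
        have h3 : (((d:ℝ)-1) * au + r) * (g u x a - u x) < (((d:ℝ)-1) * au + r) * ε' :=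
          mul_lt_mul_of_pos_left hd1 hKden
        have h4 : (((d:ℝ)-1) * au + r) * ε' = ε := by
          rw [hε']; field_simp
        linarith
      have hHle : Ham x p ≤ f x a + ∑ y : Fin d, a y * p y := by
        rw [hHam]
        exact csInf_le hHamBdd ⟨a, ha, rfl⟩
      linarith
    linarith
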